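/- For every natural number n, ∑_{k=0}^{n} (-1)^{k} (1/(k+3)) · C(n, k) = 2/((n+1)(n+2)(n+3)), as rational numbers. -/

import Mathlib

lemma euler_aux (n : ℕ) : ∀ m : ℕ,
    ∑ k ∈ Finset.range (n + 1), (-1 : ℚ) ^ k * (1 / (k + m + 1)) * (n.choose k) =
      (m.factorial * n.factorial) / (n + m + 1).factorial := by
  induction n with
  | zero =>
    intro m
    simp [Nat.factorial_succ]
    have hf : ((m.factorial:ℚ)) ≠ 0 := by positivity
    field_simp
  | succ n ih =>
    intro m
    have B1 : ∑ k ∈ Finset.range (n + 2), (-1 : ℚ) ^ k * (1 / (k + m + 1)) * (n.choose k) =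
        (m.factorial * n.factorial) / (n + m + 1).factorial := by
      rw [Finset.sum_range_succ]
      simp only [Nat.choose_succ_self, Nat.cast_zero, mul_zero, add_zero]
      exact ih m
    rw [Finset.sum_range_succ'] at B1 ⊢
    have key : ∀ k ∈ Finset.range (n + 1),
        (-1 : ℚ) ^ (k+1) * (1 / ((((k+1):ℕ):ℚ) + m + 1)) * ((n+1).choose (k+1)) =
        (-((-1 : ℚ) ^ k * (1 / ((k:ℚ) + (m+1) + 1)) * (n.choose k)))
          + (-1 : ℚ) ^ (k+1) * (1 / ((k:ℚ) + 1 + m + 1)) * (n.choose (k+1)) := by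
      intro k _
      rw [Nat.choose_succ_succ]
      push_cast
      ring
    rw [Finset.sum_congr rfl key, Finset.sum_add_distrib, Finset.sum_neg_distrib]
    have H2 := ih (m+1)
    push_cast at H2
    have hB : ∑ k ∈ Finset.range (n + 1),
        (-1 : ℚ) ^ (k+1) * (1 / ((((k+1):ℕ):ℚ) + m + 1)) * (n.choose (k+1)) =
        (m.factorial * n.factorial) / (n + m + 1).factorial
          - (-1 : ℚ) ^ 0 * (1 / ((0:ℚ) + m + 1)) * (n.choose 0) := by
      rw [← B1]; push_cast; ring
    push_cast at hB ⊢
    rw [H2, hB]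
    have c1 : ((n + (m+1) + 1).factorial : ℚ) = ((n:ℚ) + m + 2) * (n + m + 1).factorial := by
      have : n + (m+1) + 1 = (n + m + 1) + 1 := by omega
      rw [this, Nat.factorial_succ]; push_cast; ring
    have c2 : ((n + 1 + m + 1).factorial : ℚ) = ((n:ℚ) + m + 2) * (n + m + 1).factorial := by
      have : n + 1 + m + 1 = (n + m + 1) + 1 := by omega
      rw [this, Nat.factorial_succ]; push_cast; ring
    have c3 : (((m+1)).factorial : ℚ) = ((m:ℚ) + 1) * m.factorial := by
      rw [Nat.factorial_succ]; push_cast; ring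
    have c4 : (((n+1)).factorial : ℚ) = ((n:ℚ) + 1) * n.factorial := by
      rw [Nat.factorial_succ]; push_cast; ring
    rw [c1, c2, c3, c4]
    have hf : ((n + m + 1).factorial : ℚ) ≠ 0 := by positivity
    have hn : ((n:ℚ) + m + 2) ≠ 0 := by positivity
    have hm : ((m:ℚ) + 1) ≠ 0 := by positivity
    simp only [Nat.choose_zero_right, Nat.cast_one]
    field_simp
    ring

theorem euler_case6 (n : ℕ) :
    ∑ k ∈ Finset.range (n + 1), (-1 : ℚ) ^ k * (1 / (k + 3)) * (n.choose k) =
      2 / ((n + 1) * (n + 2) * (n + 3)) := by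
  have h := euler_aux n 2
  have e : (n + 2 + 1) = n + 3 := by omega
  rw [e] at h
  have lhs_eq : ∑ k ∈ Finset.range (n + 1), (-1 : ℚ) ^ k * (1 / (k + 3)) * (n.choose k) =
      ∑ k ∈ Finset.range (n + 1), (-1 : ℚ) ^ k * (1 / (k + (2:ℕ) + 1)) * (n.choose k) := by
    apply Finset.sum_congr rfl; intro k _; push_cast; ring_nf
  rw [lhs_eq, h]
  have : (n+3).factorial = (n+3) * ((n+2) * ((n+1) * n.factorial)) := by
    rw [show n+3 = (n+2)+1 from rfl, Nat.factorial_succ,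
        show n+2 = (n+1)+1 from rfl, Nat.factorial_succ,
        show n+1 = n+1 from rfl, Nat.factorial_succ]
  rw [this]
  have hf : ((n.factorial : ℚ)) ≠ 0 := by positivity
  push_cast
  rw [Nat.factorial_two]
  field_simp
  ring
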